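/- arXiv:2103.02373 — 5 statements merged into one kernel-verified Lean document; each statement's English description precedes it below -/
import Mathlib

section
/- For all t > 0 and x ∈ [0,1], ∫₀¹ G(t,x,y)² dy ≥ 1/√(8πt), where G is the periodic heat kernel on [0,1]. -/
open Real MeasureTheory

/-- The periodic heat kernel on `[0,1]` via its spectral decomposition
`G(t,x,y) = ∑_{j ∈ ℤ} e^{-4π²j²t} e^{2πi j (x-y)}`. -/
noncomputable def heatKernel (t x y : ℝ) : ℂ :=
  ∑' j : ℤ, Complex.exp (-4 * (π : ℂ) ^ 2 * (j : ℂ) ^ 2 * (t : ℂ)) *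
    Complex.exp (2 * (π : ℂ) * Complex.I * (j : ℂ) * ((x : ℂ) - (y : ℂ)))

lemma summable_gauss_int {s : ℝ} (hs : 0 < s) (a : ℝ) :
    Summable fun n : ℤ => Real.exp (-((n : ℝ) + a)^2 / s) := by
  have h : (0:ℝ) < 1 / (π * s) := by positivity
  refine (HurwitzKernelBounds.summable_f_int 0 a h).congr fun n => ?_
  rw [HurwitzKernelBounds.f_int, pow_zero, one_mul]
  congr 1
  field_simp


lemma heatKernel_continuous {t : ℝ} (ht : 0 < t) (x : ℝ) :
    Continuous fun y : ℝ => heatKernel t x y := by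
  unfold heatKernel
  apply continuous_tsum (u := fun j : ℤ => Real.exp (-4*π^2*(j:ℝ)^2*t))
  · intro j
    fun_prop
  · have h : (0:ℝ) < 1/(4*π^2*t) := by positivity
    refine (summable_gauss_int h 0).congr fun n => ?_
    congr 1
    field_simp
    ring
  · intro j y
    have : Complex.exp (-4 * (π:ℂ)^2 * (j:ℂ)^2 * (t:ℂ)) * Complex.exp (2*(π:ℂ)*Complex.I*(j:ℂ)*((x:ℂ)-(y:ℂ)))
        = ((Real.exp (-4*π^2*(j:ℝ)^2*t) : ℝ) : ℂ) * Complex.exp (((2*π*(j:ℝ)*(x-y) : ℝ) : ℂ) * Complex.I) := by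
      rw [Complex.ofReal_exp]
      congr 1
      · push_cast; ring
      · congr 1; push_cast; ring
    rw [this, norm_mul, Complex.norm_exp_ofReal_mul_I, mul_one, Complex.norm_real,
      Real.norm_of_nonneg (Real.exp_pos _).le]

lemma poisson_heatKernel {t : ℝ} (ht : 0 < t) (x y : ℝ) :
    heatKernel t x y =
      ((∑' n : ℤ, (1 / Real.sqrt (4*π*t)) * Real.exp (-(x - y - (n:ℝ))^2 / (4*t)) : ℝ) : ℂ) := by
  have ht4 : (0:ℝ) < 4*π*t := by positivity
  have ha : (0:ℝ) < (((4*π*t : ℝ) : ℂ)).re := by simpa using ht4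
  have key := Complex.tsum_exp_neg_quadratic ha (Complex.I * ((x:ℂ) - (y:ℂ)))
  have hL : heatKernel t x y = ∑' n : ℤ,
      Complex.exp (-(π:ℂ) * ((4*π*t : ℝ):ℂ) * (n:ℂ) ^ 2 + 2 * (π:ℂ) * (Complex.I * ((x:ℂ) - (y:ℂ))) * (n:ℂ)) := by
    unfold heatKernel
    refine tsum_congr fun n => ?_
    rw [← Complex.exp_add]
    congr 1
    push_cast
    ring
  rw [hL, key]
  have hπ : (π:ℂ) ≠ 0 := Complex.ofReal_ne_zero.2 Real.pi_ne_zero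
  have ht0 : (t:ℂ) ≠ 0 := Complex.ofReal_ne_zero.2 ht.ne'
  have h1 : ∀ n : ℤ, -(π:ℂ) / ((4*π*t : ℝ):ℂ) * ((n:ℂ) + Complex.I * (Complex.I * ((x:ℂ) - (y:ℂ))))^2
      = ((-(x - y - (n:ℝ))^2 / (4*t) : ℝ) : ℂ) := by
    intro n
    rw [← mul_assoc, Complex.I_mul_I]
    push_cast
    field_simp
    ring
  have h2 : (1 : ℂ) / ((4*π*t : ℝ):ℂ) ^ (1/2 : ℂ) = (((1 / Real.sqrt (4*π*t)) : ℝ) : ℂ) := by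
    rw [show ((1:ℂ)/2) = ((1/2 : ℝ) : ℂ) by norm_num, ← Complex.ofReal_cpow ht4.le,
      ← Real.sqrt_eq_rpow]
    push_cast
    ring
  simp_rw [h1, ← Complex.ofReal_exp, h2, ← Complex.ofReal_tsum, ← Complex.ofReal_mul,
    tsum_mul_left]

theorem stmt1 (t x : ℝ) (ht : 0 < t) (hx : x ∈ Set.Icc (0 : ℝ) 1) :
    1 / Real.sqrt (8 * π * t) ≤ ∫ y in (0 : ℝ)..1, ((heatKernel t x y).re) ^ 2 := by
  have ht4 : (0:ℝ) < 4*π*t := by positivity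
  set c : ℝ := 1 / Real.sqrt (4*π*t) with hc
  have hc0 : 0 < c := by rw [hc]; positivity
  set g : ℤ → ℝ → ℝ := fun n y => c * Real.exp (-(x - y - (n:ℝ))^2 / (4*t)) with hg
  -- pointwise representation
  have hre : ∀ y : ℝ, (heatKernel t x y).re = ∑' n : ℤ, g n y := by
    intro y
    rw [poisson_heatKernel ht x y, Complex.ofReal_re]
  -- summability of g and of its squares
  have hsum : ∀ y : ℝ, Summable fun n : ℤ => g n y := by
    intro y
    refine ((summable_gauss_int (by positivity : (0:ℝ) < 4*t) (y - x)).mul_left c).congr fun n => ?_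
    simp only [hg]
    congr 2
    ring
  have hsq : ∀ (n : ℤ) (y : ℝ), (g n y)^2 = c^2 * Real.exp (-((n:ℝ) + (y - x))^2 / (2*t)) := by
    intro n y
    simp only [hg, mul_pow, sq (Real.exp _), ← Real.exp_add]
    congr 2
    field_simp
    ring
  have hsumsq : ∀ y : ℝ, Summable fun n : ℤ => (g n y)^2 := by
    intro y
    refine ((summable_gauss_int (by positivity : (0:ℝ) < 2*t) (y - x)).mul_left (c^2)).congr fun n => ?_
    rw [hsq]
  -- pointwise lower bound for the square
  have hptwise : ∀ y : ℝ, (∑' n : ℤ, (g n y)^2) ≤ ((heatKernel t x y).re)^2 := by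
    intro y
    rw [hre y]
    have hH : ∀ n : ℤ, g n y ≤ ∑' m : ℤ, g m y := by
      intro n
      exact Summable.le_tsum (hsum y) n fun m _ => le_of_lt (by positivity)
    calc (∑' n : ℤ, (g n y)^2) ≤ ∑' n : ℤ, g n y * (∑' m : ℤ, g m y) := by
          refine Summable.tsum_le_tsum (fun n => ?_) (hsumsq y) ((hsum y).mul_right _)
          rw [sq]
          exact mul_le_mul_of_nonneg_left (hH n) (le_of_lt (by positivity))
      _ = ((∑' n : ℤ, g n y))^2 := by rw [tsum_mul_right, sq]
  -- the comparison Gaussian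
  set φ : ℝ → ℝ := fun u => Real.exp (-(1/(2*t)) * u^2) with hφ
  have hφint : Integrable φ := by
    simpa only [hφ] using integrable_exp_neg_mul_sq (by positivity : (0:ℝ) < 1/(2*t))
  have hφval : (∫ u : ℝ, φ u) = Real.sqrt (2*π*t) := by
    simp only [hφ]
    rw [integral_gaussian]
    congr 1
    field_simp
  have hIn : ∀ n : ℤ, (∫ y in (0:ℝ)..1, (g n y)^2) =
      c^2 * ∫ u in Set.Ioc ((x-1) + ((-n : ℤ):ℝ)) ((x-1) + ((-n : ℤ):ℝ) + 1), φ u := by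
    intro n
    have e1 : ∀ y : ℝ, (g n y)^2 = c^2 * φ ((x - (n:ℝ)) - y) := by
      intro y; rw [hsq]; simp only [hφ]; congr 1; ring
    simp_rw [e1]
    rw [intervalIntegral.integral_const_mul,
      intervalIntegral.integral_comp_sub_left φ (x - (n:ℝ)), sub_zero]
    congr 1
    rw [intervalIntegral.integral_of_le (by linarith : x - (n:ℝ) - 1 ≤ x - (n:ℝ))]
    have hset : Set.Ioc (x - (n:ℝ) - 1) (x - (n:ℝ))
        = Set.Ioc ((x-1) + ((-n : ℤ):ℝ)) ((x-1) + ((-n : ℤ):ℝ) + 1) := by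
      push_cast
      congr 1 <;> ring
    rw [hset]
  have hHS : HasSum (fun m : ℤ => ∫ u in Set.Ioc ((x-1) + (m:ℝ)) ((x-1) + (m:ℝ) + 1), φ u)
      (Real.sqrt (2*π*t)) := by
    have h1 := MeasureTheory.hasSum_integral_iUnion (μ := volume)
      (s := fun m : ℤ => Set.Ioc ((x-1) + (m:ℝ)) ((x-1) + (m:ℝ) + 1))
      (fun m => measurableSet_Ioc) (Set.pairwise_disjoint_Ioc_add_intCast (x-1))
      (hφint.integrableOn)
    rw [iUnion_Ioc_add_intCast (x-1)] at h1
    simpa [hφval] using h1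
  have hSummable : Summable fun n : ℤ => ∫ y in (0:ℝ)..1, (g n y)^2 := by
    exact (((hHS.summable.comp_injective neg_injective).mul_left (c^2)).congr
      (fun n => (hIn n).symm))
  have hHcont : Continuous fun y : ℝ => ((heatKernel t x y).re)^2 :=
    (Complex.continuous_re.comp (heatKernel_continuous ht x)).pow 2
  have hgc : ∀ n : ℤ, Continuous fun y : ℝ => (g n y)^2 := by
    intro n; simp only [hg]; fun_prop
  have hfin : ∀ s : Finset ℤ, (∑ n ∈ s, ∫ y in (0:ℝ)..1, (g n y)^2)
      ≤ ∫ y in (0:ℝ)..1, ((heatKernel t x y).re)^2 := by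
    intro s
    rw [← intervalIntegral.integral_finset_sum (fun n _ => ((hgc n).intervalIntegrable 0 1))]
    refine intervalIntegral.integral_mono_on zero_le_one
      ((continuous_finset_sum s fun n _ => hgc n).intervalIntegrable 0 1)
      (hHcont.intervalIntegrable 0 1) (fun y hy => ?_)
    calc (∑ n ∈ s, (g n y)^2) ≤ ∑' n : ℤ, (g n y)^2 :=
          Summable.sum_le_tsum s (fun n _ => sq_nonneg _) (hsumsq y)
      _ ≤ _ := hptwise y
  have htsumval : (∑' n : ℤ, ∫ y in (0:ℝ)..1, (g n y)^2) = c^2 * Real.sqrt (2*π*t) := by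
    rw [tsum_congr hIn, tsum_mul_left]
    congr 1
    rw [← hHS.tsum_eq]
    simpa using (Equiv.neg ℤ).tsum_eq
      (fun m : ℤ => ∫ u in Set.Ioc ((x-1) + (m:ℝ)) ((x-1) + (m:ℝ) + 1), φ u)
  have hmain : c^2 * Real.sqrt (2*π*t) ≤ ∫ y in (0:ℝ)..1, ((heatKernel t x y).re)^2 := by
    rw [← htsumval]
    exact Summable.tsum_le_of_sum_le hSummable hfin
  refine le_trans (le_of_eq ?_) hmain
  have hc2 : c^2 = 1/(4*π*t) := by rw [hc, div_pow, one_pow, Real.sq_sqrt ht4.le]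
  have hs8 : 0 < Real.sqrt (8*π*t) := Real.sqrt_pos.2 (by positivity)
  have h8 : Real.sqrt (2*π*t) * Real.sqrt (8*π*t) = 4*π*t := by
    rw [← Real.sqrt_mul (by positivity), show (2*π*t) * (8*π*t) = (4*π*t)^2 by ring,
      Real.sqrt_sq ht4.le]
  rw [hc2, one_div_mul_eq_div, one_div, inv_eq_one_div, div_eq_div_iff hs8.ne' ht4.ne']
  linarith [h8]
end

section
/- Let J₀ > 0, ζ > 0, λ > 0, b = λ²J₀²/√(32π), and n ≥ ζλ². Then there exists μ ∈ (0,1) with μ ≥ 8πζ/(J₀² + 8πζ) such that g(t) = b e^{-πμ²b²t} (1 - e^{-2n²π²t})/√t is a probability density function on [0,∞), i.e. ∫₀^∞ g(t) dt = 1. -/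
open Real MeasureTheory

lemma myInteg {c : ℝ} (hc : 0 < c) :
    IntegrableOn (fun t => Real.exp (-(c * t)) / Real.sqrt t) (Set.Ioi (0 : ℝ)) := by
  have h := integrableOn_rpow_mul_exp_neg_mul_rpow (s := -(1/2)) (p := 1)
    (by norm_num) zero_lt_one hc
  refine h.congr_fun (fun t ht => ?_) measurableSet_Ioi
  have ht0 : (0:ℝ) < t := ht
  beta_reduce
  rw [Real.rpow_one, Real.rpow_neg ht0.le, Real.sqrt_eq_rpow]
  rw [neg_mul]
  ring

lemma myIntegral {c : ℝ} (hc : 0 < c) :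
    ∫ t in Set.Ioi (0 : ℝ), Real.exp (-(c * t)) / Real.sqrt t
      = Real.sqrt π / Real.sqrt c := by
  have h := integral_rpow_mul_exp_neg_mul_Ioi (a := 1/2) (r := c) (by norm_num) hc
  have heq : ∫ t in Set.Ioi (0 : ℝ), Real.exp (-(c * t)) / Real.sqrt t
      = ∫ t in Set.Ioi (0 : ℝ), t ^ (1/2 - 1 : ℝ) * Real.exp (-(c * t)) := by
    refine setIntegral_congr_fun measurableSet_Ioi (fun t ht => ?_)
    have ht0 : (0:ℝ) < t := ht
    rw [show (1/2 - 1 : ℝ) = -(1/2) by norm_num, Real.rpow_neg ht0.le,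
      Real.sqrt_eq_rpow]
    ring
  rw [heq, h, Real.Gamma_one_half_eq, ← Real.sqrt_eq_rpow, one_div, Real.sqrt_inv]
  rw [inv_mul_eq_div]

lemma mainIntegral {b c d : ℝ} (hc : 0 < c) (hd : 0 < d) :
    ∫ t in Set.Ioi (0 : ℝ), b * Real.exp (-(c * t)) * (1 - Real.exp (-(d * t))) / Real.sqrt t
      = b * (Real.sqrt π / Real.sqrt c) - b * (Real.sqrt π / Real.sqrt (c + d)) := by
  have hcd : 0 < c + d := by linarith
  have heq : ∫ t in Set.Ioi (0 : ℝ),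
        b * Real.exp (-(c * t)) * (1 - Real.exp (-(d * t))) / Real.sqrt t
      = ∫ t in Set.Ioi (0 : ℝ),
        (b * (Real.exp (-(c * t)) / Real.sqrt t)
          - b * (Real.exp (-((c + d) * t)) / Real.sqrt t)) := by
    refine setIntegral_congr_fun measurableSet_Ioi (fun t ht => ?_)
    have h1 : Real.exp (-((c + d) * t)) = Real.exp (-(c * t)) * Real.exp (-(d * t)) := by
      rw [← Real.exp_add]; ring_nf
    rw [h1]; ring
  rw [heq, integral_sub ((myInteg hc).const_mul b) ((myInteg hcd).const_mul b),
    integral_const_mul, integral_const_mul, myIntegral hc, myIntegral hcd]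

theorem stmt11 (J₀ ζ lam : ℝ) (hJ : 0 < J₀) (hζ : 0 < ζ) (hlam : 0 < lam)
    (n : ℕ) (hn : ζ * lam ^ 2 ≤ (n : ℝ)) :
    ∃ μ : ℝ, μ ∈ Set.Ioo (0 : ℝ) 1 ∧ 8 * π * ζ / (J₀ ^ 2 + 8 * π * ζ) ≤ μ ∧
      (∫ t in Set.Ioi (0 : ℝ),
        (lam ^ 2 * J₀ ^ 2 / Real.sqrt (32 * π)) *
          Real.exp (-π * μ ^ 2 * (lam ^ 2 * J₀ ^ 2 / Real.sqrt (32 * π)) ^ 2 * t) *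
          (1 - Real.exp (-2 * (n : ℝ) ^ 2 * π ^ 2 * t)) / Real.sqrt t) = 1 := by
  set b : ℝ := lam ^ 2 * J₀ ^ 2 / Real.sqrt (32 * π) with hb_def
  have h32 : (0:ℝ) < Real.sqrt (32 * π) := Real.sqrt_pos.mpr (by positivity)
  have hb : 0 < b := by positivity
  have hnpos : (0:ℝ) < (n:ℝ) := lt_of_lt_of_le (by positivity) hn
  set S : ℝ := 2 * (n:ℝ) ^ 2 * π with hS_def
  have hS : 0 < S := by positivity
  have hsqS : 0 < Real.sqrt S := Real.sqrt_pos.mpr hS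
  set f : ℝ → ℝ := fun μ => 1 / μ - b / Real.sqrt (μ ^ 2 * b ^ 2 + S) with hf_def
  -- key: for μ > 0, the integral equals f μ
  have key : ∀ μ : ℝ, 0 < μ →
      (∫ t in Set.Ioi (0 : ℝ),
        b * Real.exp (-π * μ ^ 2 * b ^ 2 * t) *
          (1 - Real.exp (-2 * (n : ℝ) ^ 2 * π ^ 2 * t)) / Real.sqrt t) = f μ := by
    intro μ hμ
    have hc : (0:ℝ) < π * μ ^ 2 * b ^ 2 := by positivity
    have hd : (0:ℝ) < 2 * (n:ℝ) ^ 2 * π ^ 2 := by positivity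
    have heq : (∫ t in Set.Ioi (0 : ℝ),
        b * Real.exp (-π * μ ^ 2 * b ^ 2 * t) *
          (1 - Real.exp (-2 * (n : ℝ) ^ 2 * π ^ 2 * t)) / Real.sqrt t)
        = ∫ t in Set.Ioi (0 : ℝ),
        b * Real.exp (-((π * μ ^ 2 * b ^ 2) * t)) *
          (1 - Real.exp (-((2 * (n : ℝ) ^ 2 * π ^ 2) * t))) / Real.sqrt t := by
      refine setIntegral_congr_fun measurableSet_Ioi (fun t ht => ?_)
      ring_nf
    rw [heq, mainIntegral hc hd]
    have h1 : Real.sqrt (π * μ ^ 2 * b ^ 2) = Real.sqrt π * (μ * b) := by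
      rw [show π * μ ^ 2 * b ^ 2 = π * (μ * b) ^ 2 by ring,
        Real.sqrt_mul pi_pos.le, Real.sqrt_sq (by positivity)]
    have h2 : Real.sqrt (π * μ ^ 2 * b ^ 2 + 2 * (n:ℝ) ^ 2 * π ^ 2)
        = Real.sqrt π * Real.sqrt (μ ^ 2 * b ^ 2 + S) := by
      rw [show π * μ ^ 2 * b ^ 2 + 2 * (n:ℝ) ^ 2 * π ^ 2
          = π * (μ ^ 2 * b ^ 2 + S) by rw [hS_def]; ring,
        Real.sqrt_mul pi_pos.le]
    have hπ : Real.sqrt π ≠ 0 := ne_of_gt (Real.sqrt_pos.mpr pi_pos)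
    have hQ : Real.sqrt (μ ^ 2 * b ^ 2 + S) ≠ 0 :=
      ne_of_gt (Real.sqrt_pos.mpr (by positivity))
    rw [h1, h2, hf_def]
    field_simp
  -- IVT setup
  set K : ℝ := b / Real.sqrt S with hK_def
  have hK : 0 < K := by positivity
  set a : ℝ := 1 / (2 + K) with ha_def
  have ha : 0 < a := by positivity
  have ha1 : a < 1 := by
    rw [ha_def, div_lt_one (by linarith)]; linarith
  -- bound: for μ in [a,1] (really any μ), b / sqrt(μ²b²+S) ≤ K
  have hbound : ∀ μ : ℝ, b / Real.sqrt (μ ^ 2 * b ^ 2 + S) ≤ K := by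
    intro μ
    rw [hK_def]
    apply div_le_div_of_nonneg_left hb.le hsqS
    exact Real.sqrt_le_sqrt (by nlinarith [sq_nonneg (μ * b)])
  have hcont : ContinuousOn f (Set.Icc a 1) := by
    apply ContinuousOn.sub
    · exact continuousOn_const.div continuousOn_id
        (fun x hx => ne_of_gt (lt_of_lt_of_le ha hx.1))
    · refine continuousOn_const.div ?_ ?_
      · exact (Real.continuous_sqrt.comp (by fun_prop)).continuousOn
      · intro x hx
        exact ne_of_gt (Real.sqrt_pos.mpr (by positivity))
  have hfa : 1 < f a := by
    have h1 : (1:ℝ) / a = 2 + K := by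
      rw [ha_def]; field_simp
    have := hbound a
    rw [hf_def]
    simp only
    rw [h1]
    linarith
  have hf1 : f 1 < 1 := by
    have : 0 < b / Real.sqrt (1 ^ 2 * b ^ 2 + S) := by positivity
    rw [hf_def]; simp only
    linarith
  obtain ⟨μ, hμmem, hμeq⟩ := intermediate_value_Ioo' ha1.le hcont ⟨hf1, hfa⟩
  have hμ0 : 0 < μ := lt_trans ha hμmem.1
  have hμ1 : μ < 1 := hμmem.2
  refine ⟨μ, ⟨hμ0, hμ1⟩, ?_, ?_⟩
  · -- lower bound
    have h8 : (0:ℝ) < 8 * π * ζ := by positivity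
    have hKJ : K ≤ J₀ ^ 2 / (8 * π * ζ) := by
      have hsqS_eq : Real.sqrt S = Real.sqrt (2 * π) * (n:ℝ) := by
        rw [hS_def, show 2 * (n:ℝ) ^ 2 * π = (2 * π) * (n:ℝ) ^ 2 by ring,
          Real.sqrt_mul (by positivity), Real.sqrt_sq hnpos.le]
      have hsq2π : (0:ℝ) < Real.sqrt (2 * π) := Real.sqrt_pos.mpr (by positivity)
      have hmul : Real.sqrt (32 * π) * Real.sqrt (2 * π) = 8 * π := by
        rw [← Real.sqrt_mul (by positivity),
          show (32 * π) * (2 * π) = (8 * π) ^ 2 by ring,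
          Real.sqrt_sq (by positivity)]
      have h1 : K ≤ b / (Real.sqrt (2 * π) * (ζ * lam ^ 2)) := by
        rw [hK_def, hsqS_eq]
        apply div_le_div_of_nonneg_left hb.le (by positivity)
        exact mul_le_mul_of_nonneg_left hn hsq2π.le
      have h2 : b / (Real.sqrt (2 * π) * (ζ * lam ^ 2)) = J₀ ^ 2 / (8 * π * ζ) := by
        rw [hb_def]
        rw [div_div]
        rw [show Real.sqrt (32 * π) * (Real.sqrt (2 * π) * (ζ * lam ^ 2))
          = (Real.sqrt (32 * π) * Real.sqrt (2 * π)) * (ζ * lam ^ 2) by ring, hmul]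
        field_simp
      linarith
    have hμval : 1 / μ = 1 + b / Real.sqrt (μ ^ 2 * b ^ 2 + S) := by
      have := hμeq
      rw [hf_def] at this
      simp only at this
      linarith
    have hinv : 1 / μ ≤ (J₀ ^ 2 + 8 * π * ζ) / (8 * π * ζ) := by
      rw [hμval]
      have h2 : (J₀ ^ 2 + 8 * π * ζ) / (8 * π * ζ) = J₀ ^ 2 / (8 * π * ζ) + 1 := by
        field_simp
      rw [h2]
      linarith [hbound μ]
    rw [div_le_iff₀ (by positivity : (0:ℝ) < J₀ ^ 2 + 8 * π * ζ)]
    rw [div_le_div_iff₀ hμ0 h8] at hinv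
    nlinarith
  · rw [key μ hμ0, hμeq]
end

section
/- Let J₀, ζ > 0, λ > 0, b̃ = λ²J₀²/(8√π), and suppose n ≥ ζλ² and J₀⁴n²τ/(16πζ²) + 16πn²τ < 1 with 0 < τ < 1. Then there exists μ ∈ (0,1) with μ ≥ 16πζ/(J₀² + 32πζ) such that Σ_{r=1}^∞ g̃(r) = 1, where g̃(r) = b̃ e^{-πμ²b̃²rτ} (1 - e^{-4n²π²rτ}) τ/√(rτ); i.e. (g̃(r))_{r≥1} is a discrete probability density. -/
open Real MeasureTheory Set

noncomputable def gg (a x : ℝ) : ℝ := Real.exp (-(a * x)) / Real.sqrt x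

lemma gg_nonneg (a x : ℝ) : 0 ≤ gg a x := by unfold gg; positivity

lemma gg_antitoneOn {a : ℝ} (ha : 0 < a) : AntitoneOn (gg a) (Set.Ioi 0) := by
  intro x hx y hy hxy
  unfold gg
  have hx0 : (0:ℝ) < x := hx
  exact div_le_div₀ (Real.exp_nonneg _)
    (Real.exp_le_exp.2 (by nlinarith)) (Real.sqrt_pos.2 hx0) (Real.sqrt_le_sqrt hxy)

lemma gg_eq {a : ℝ} {x : ℝ} (hx : 0 < x) :
    gg a x = Real.exp (-(a*x)) * x ^ (-(1:ℝ)/2) := by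
  unfold gg
  rw [div_eq_mul_inv, Real.sqrt_eq_rpow, ← Real.rpow_neg hx.le]
  norm_num

lemma gg_integrableOn {a : ℝ} (ha : 0 < a) : IntegrableOn (gg a) (Set.Ioi 0) := by
  have h0 : IntegrableOn (fun x : ℝ => Real.exp (-x) * x ^ ((1:ℝ)/2 - 1)) (Set.Ioi 0) :=
    Real.GammaIntegral_convergent one_half_pos
  have h1 : IntegrableOn (fun x : ℝ => Real.exp (-(a*x)) * (a*x) ^ ((1:ℝ)/2 - 1)) (Set.Ioi 0) := by
    have := (integrableOn_Ioi_comp_mul_left_iff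
      (fun x : ℝ => Real.exp (-x) * x ^ ((1:ℝ)/2 - 1)) 0 ha).mpr (by simpa using h0)
    simpa using this
  have h2 : IntegrableOn (fun x : ℝ => a ^ ((1:ℝ)/2) * (Real.exp (-(a*x)) * (a*x) ^ ((1:ℝ)/2 - 1))) (Set.Ioi 0) := h1.const_mul _
  apply h2.congr_fun ?_ measurableSet_Ioi
  intro x hx
  have hx0 : (0:ℝ) < x := hx
  show a ^ ((1:ℝ)/2) * _ = gg a x
  rw [gg_eq hx0, show (1:ℝ)/2 - 1 = -(1:ℝ)/2 by norm_num,
    Real.mul_rpow ha.le hx0.le, ← mul_assoc,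
    mul_comm (a ^ ((1:ℝ)/2)) (Real.exp (-(a*x))),
    mul_assoc (Real.exp (-(a*x)))]
  congr 1
  rw [← mul_assoc, ← Real.rpow_add ha]
  norm_num

lemma gg_integral {a : ℝ} (ha : 0 < a) :
    ∫ x in Set.Ioi (0:ℝ), gg a x = Real.sqrt π / Real.sqrt a := by
  have hΓ : ∫ x in Set.Ioi (0:ℝ), Real.exp (-x) * x ^ ((1:ℝ)/2 - 1) = Real.sqrt π := by
    rw [← Real.Gamma_eq_integral one_half_pos, Real.Gamma_one_half_eq]
  have hsub := MeasureTheory.integral_comp_mul_left_Ioi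
    (fun x : ℝ => Real.exp (-x) * x ^ ((1:ℝ)/2 - 1)) 0 ha
  simp only [mul_zero] at hsub
  rw [hΓ] at hsub
  have hcg : ∫ x in Set.Ioi (0:ℝ), Real.exp (-(a*x)) * (a*x) ^ ((1:ℝ)/2 - 1)
      = ∫ x in Set.Ioi (0:ℝ), a ^ (-(1:ℝ)/2) * gg a x := by
    apply MeasureTheory.setIntegral_congr_fun measurableSet_Ioi
    intro x hx
    have hx0 : (0:ℝ) < x := hx
    dsimp only
    rw [gg_eq hx0, show (1:ℝ)/2 - 1 = -(1:ℝ)/2 by norm_num, Real.mul_rpow ha.le hx0.le]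
    ring
  rw [hcg, MeasureTheory.integral_const_mul, smul_eq_mul] at hsub
  have hrp : a ^ (-(1:ℝ)/2) = (Real.sqrt a)⁻¹ := by
    rw [Real.sqrt_eq_rpow, ← Real.rpow_neg ha.le]
    norm_num
  rw [hrp] at hsub
  have hsa : Real.sqrt a ≠ 0 := ne_of_gt (Real.sqrt_pos.2 ha)
  have haa : Real.sqrt a * Real.sqrt a = a := Real.mul_self_sqrt ha.le
  field_simp at hsub ⊢
  apply mul_right_cancel₀ hsa
  rw [mul_comm (Real.sqrt a), mul_assoc, haa, mul_comm (Real.sqrt π)]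
  exact hsub

lemma gg_summable {a : ℝ} (ha : 0 < a) : Summable (fun r : ℕ => gg a ((r:ℝ)+1)) := by
  have hgeo : Summable (fun r : ℕ => Real.exp (-a) * Real.exp (-a) ^ r) :=
    (summable_geometric_of_lt_one (Real.exp_nonneg _)
      (by rwa [Real.exp_lt_one_iff, neg_lt_zero])).mul_left _
  apply Summable.of_nonneg_of_le (fun r => gg_nonneg _ _) (fun r => ?_) hgeo
  have h1 : gg a ((r:ℝ)+1) ≤ Real.exp (-(a*((r:ℝ)+1))) := by
    unfold gg
    apply div_le_self (Real.exp_nonneg _)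
    exact Real.one_le_sqrt.mpr (by linarith)
  calc gg a ((r:ℝ)+1) ≤ Real.exp (-(a*((r:ℝ)+1))) := h1
    _ = Real.exp (-a) * Real.exp (-a) ^ r := by
        rw [← Real.exp_nat_mul, ← Real.exp_add]
        push_cast
        ring_nf

lemma gg_int_Ioc {a : ℝ} (ha : 0 < a) :
    ∫ x in Set.Ioc (0:ℝ) 1, gg a x ≤ 2 := by
  have hint : IntegrableOn (gg a) (Set.Ioc 0 1) :=
    (gg_integrableOn ha).mono_set Set.Ioc_subset_Ioi_self
  have hrint : IntegrableOn (fun x : ℝ => x ^ (-(1:ℝ)/2)) (Set.Ioc 0 1) := by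
    have := intervalIntegral.intervalIntegrable_rpow' (a := 0) (b := 1) (by norm_num : (-1:ℝ) < -(1:ℝ)/2)
    simpa [intervalIntegrable_iff_integrableOn_Ioc_of_le zero_le_one] using this
  have h1 : ∫ x in Set.Ioc (0:ℝ) 1, gg a x ≤ ∫ x in Set.Ioc (0:ℝ) 1, x ^ (-(1:ℝ)/2) := by
    apply MeasureTheory.setIntegral_mono_on hint hrint measurableSet_Ioc
    intro x hx
    rw [gg_eq hx.1]
    nth_rewrite 2 [show x ^ (-(1:ℝ)/2) = 1 * x ^ (-(1:ℝ)/2) by ring]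
    apply mul_le_mul_of_nonneg_right _ (Real.rpow_nonneg hx.1.le _)
    rw [Real.exp_le_one_iff, neg_nonpos]
    nlinarith [hx.1]
  have h2 : ∫ x in Set.Ioc (0:ℝ) 1, x ^ (-(1:ℝ)/2) = 2 := by
    rw [← intervalIntegral.integral_of_le zero_le_one,
      integral_rpow (Or.inl (by norm_num : (-1:ℝ) < -(1:ℝ)/2))]
    norm_num [Real.zero_rpow, Real.one_rpow]
  linarith

lemma gg_split {a : ℝ} (ha : 0 < a) :
    (∫ x in Set.Ioc (0:ℝ) 1, gg a x) + (∫ x in Set.Ioi (1:ℝ), gg a x)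
      = Real.sqrt π / Real.sqrt a := by
  rw [← gg_integral ha, ← MeasureTheory.setIntegral_union (Set.Ioc_disjoint_Ioi le_rfl)
    measurableSet_Ioi ((gg_integrableOn ha).mono_set Set.Ioc_subset_Ioi_self)
    ((gg_integrableOn ha).mono_set (Set.Ioi_subset_Ioi zero_le_one)),
    Set.Ioc_union_Ioi_eq_Ioi zero_le_one]

lemma gg_sum_chunk {a : ℝ} (ha : 0 < a) (N : ℕ) :
    ∑ i ∈ Finset.range N, gg a (1 + ((i:ℕ)+1 : ℕ)) ≤ ∫ x in Set.Ioi (1:ℝ), gg a x := by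
  have hf : AntitoneOn (gg a) (Set.Icc 1 (1 + (N:ℕ))) :=
    (gg_antitoneOn ha).mono (fun x hx => lt_of_lt_of_le zero_lt_one hx.1)
  calc ∑ i ∈ Finset.range N, gg a (1 + ((i:ℕ)+1 : ℕ)) ≤ ∫ x in (1:ℝ)..(1 + (N:ℕ)), gg a x :=
        AntitoneOn.sum_le_integral hf
    _ ≤ ∫ x in Set.Ioi (1:ℝ), gg a x := by
        rw [intervalIntegral.integral_of_le (by simp : (1:ℝ) ≤ 1 + (N:ℕ))]
        apply MeasureTheory.setIntegral_mono_set
          ((gg_integrableOn ha).mono_set (Set.Ioi_subset_Ioi zero_le_one))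
          (Filter.Eventually.of_forall (fun x => gg_nonneg _ _))
          (HasSubset.Subset.eventuallyLE Set.Ioc_subset_Ioi_self)

lemma gg_one_le {a : ℝ} (ha : 0 < a) : gg a 1 ≤ ∫ x in Set.Ioc (0:ℝ) 1, gg a x := by
  have h := MeasureTheory.setIntegral_mono_on
    (MeasureTheory.integrableOn_const (by simp [Real.volume_Ioc]) (by simp))
    ((gg_integrableOn ha).mono_set Set.Ioc_subset_Ioi_self)
    measurableSet_Ioc
    (fun x hx => (gg_antitoneOn ha) (Set.mem_Ioi.2 hx.1) (Set.mem_Ioi.2 zero_lt_one) hx.2)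
  simpa [Real.volume_Ioc] using h

lemma gg_tsum_le {a : ℝ} (ha : 0 < a) :
    ∑' r : ℕ, gg a ((r:ℝ)+1) ≤ Real.sqrt π / Real.sqrt a := by
  apply Real.tsum_le_of_sum_range_le (fun r => gg_nonneg _ _)
  intro N
  cases N with
  | zero => simp; positivity
  | succ N =>
    rw [Finset.sum_range_succ']
    have h1 : ∑ i ∈ Finset.range N, gg a (((i:ℕ)+1 : ℕ) + 1)
        = ∑ i ∈ Finset.range N, gg a (1 + ((i:ℕ)+1 : ℕ)) := by
      apply Finset.sum_congr rfl
      intro i _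
      congr 1
      push_cast
      ring
    push_cast
    push_cast at h1
    rw [h1, show ((0:ℝ)+1 : ℝ) = 1 from by norm_num]
    have hc := gg_sum_chunk ha N
    have h5 := gg_one_le ha
    have h6 := gg_split ha
    push_cast at hc
    linarith

lemma le_gg_tsum {a : ℝ} (ha : 0 < a) :
    Real.sqrt π / Real.sqrt a - 2 ≤ ∑' r : ℕ, gg a ((r:ℝ)+1) := by
  have hIoi1 : IntegrableOn (gg a) (Set.Ioi 1) :=
    (gg_integrableOn ha).mono_set (Set.Ioi_subset_Ioi zero_le_one)
  have htend : Filter.Tendsto (fun N : ℕ => ∫ x in (1:ℝ)..(1+(N:ℝ)), gg a x)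
      Filter.atTop (nhds (∫ x in Set.Ioi (1:ℝ), gg a x)) :=
    MeasureTheory.intervalIntegral_tendsto_integral_Ioi 1 hIoi1
      (Filter.tendsto_atTop_add_const_left _ 1 tendsto_natCast_atTop_atTop)
  have hle : ∫ x in Set.Ioi (1:ℝ), gg a x ≤ ∑' r : ℕ, gg a ((r:ℝ)+1) := by
    apply le_of_tendsto htend
    apply Filter.Eventually.of_forall
    intro N
    have hf : AntitoneOn (gg a) (Set.Icc 1 (1 + (N:ℕ))) :=
      (gg_antitoneOn ha).mono (fun x hx => lt_of_lt_of_le zero_lt_one hx.1)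
    have h2 := AntitoneOn.integral_le_sum hf
    have h3 : ∑ i ∈ Finset.range N, gg a (1 + (i:ℕ)) = ∑ i ∈ Finset.range N, gg a ((i:ℝ)+1) := by
      apply Finset.sum_congr rfl
      intro i _
      congr 1
      push_cast
      ring
    have h4 : ∑ i ∈ Finset.range N, gg a ((i:ℝ)+1) ≤ ∑' r : ℕ, gg a ((r:ℝ)+1) :=
      Summable.sum_le_tsum _ (fun i _ => gg_nonneg _ _) (gg_summable ha)
    push_cast at h2 h3 ⊢
    linarith
  have h5 := gg_split ha
  have h6 := gg_int_Ioc ha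
  linarith

lemma gg_anti_a {x a a' : ℝ} (hx : 0 < x) (h : a' ≤ a) : gg a x ≤ gg a' x := by
  unfold gg
  exact (div_le_div_iff_of_pos_right (Real.sqrt_pos.2 hx)).2 (Real.exp_le_exp.2 (by nlinarith))

lemma term_eq {b τ x : ℝ} (hτ : 0 < τ) (hx : 0 < x) (p q : ℝ) :
    b * Real.exp (p*x) * (1 - Real.exp (q*x)) * τ / Real.sqrt (x*τ)
      = b * Real.sqrt τ * (gg (-p) x - gg (-(p+q)) x) := by
  unfold gg
  have hsx : Real.sqrt x ≠ 0 := ne_of_gt (Real.sqrt_pos.2 hx)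
  have hst : Real.sqrt τ ≠ 0 := ne_of_gt (Real.sqrt_pos.2 hτ)
  have hss : Real.sqrt τ * Real.sqrt τ = τ := Real.mul_self_sqrt hτ.le
  rw [Real.sqrt_mul hx.le, show -(-p*x) = p*x from by ring,
    show -(-(p+q)*x) = p*x + q*x from by ring, Real.exp_add]
  field_simp
  linear_combination (b*Real.exp (x*q) - b) * hss

set_option maxHeartbeats 1000000 in
theorem stmt14 (J₀ ζ lam τ : ℝ) (hJ : 0 < J₀) (hζ : 0 < ζ) (hlam : 0 < lam)
    (hτ : τ ∈ Set.Ioo (0 : ℝ) 1) (n : ℕ) (hn : ζ * lam ^ 2 ≤ (n : ℝ))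
    (hcond : J₀ ^ 4 * (n : ℝ) ^ 2 * τ / (16 * π * ζ ^ 2) + 16 * π * (n : ℝ) ^ 2 * τ < 1) :
    ∃ μ : ℝ, μ ∈ Set.Ioo (0 : ℝ) 1 ∧ 16 * π * ζ / (J₀ ^ 2 + 32 * π * ζ) ≤ μ ∧
      (∑' r : ℕ,
        (lam ^ 2 * J₀ ^ 2 / (8 * Real.sqrt π)) *
          Real.exp (-π * μ ^ 2 * (lam ^ 2 * J₀ ^ 2 / (8 * Real.sqrt π)) ^ 2 *
            ((r : ℝ) + 1) * τ) *
          (1 - Real.exp (-4 * (n : ℝ) ^ 2 * π ^ 2 * ((r : ℝ) + 1) * τ)) * τ /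
          Real.sqrt (((r : ℝ) + 1) * τ)) = 1 := by
  obtain ⟨hτ0, hτ1⟩ := hτ
  have hπ := Real.pi_pos
  have hsπ : (0:ℝ) < Real.sqrt π := Real.sqrt_pos.2 hπ
  have hsτ : (0:ℝ) < Real.sqrt τ := Real.sqrt_pos.2 hτ0
  have hττ : Real.sqrt τ * Real.sqrt τ = τ := Real.mul_self_sqrt hτ0.le
  have hππ : Real.sqrt π * Real.sqrt π = π := Real.mul_self_sqrt hπ.le
  set b : ℝ := lam ^ 2 * J₀ ^ 2 / (8 * Real.sqrt π) with hbdef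
  have hb : 0 < b := by positivity
  have hnR : (0:ℝ) < (n:ℝ) := lt_of_lt_of_le (by positivity) hn
  set F : ℝ → ℝ := fun μ => ∑' r : ℕ,
    b * Real.exp (-π * μ ^ 2 * b ^ 2 * ((r : ℝ) + 1) * τ) *
      (1 - Real.exp (-4 * (n : ℝ) ^ 2 * π ^ 2 * ((r : ℝ) + 1) * τ)) * τ /
      Real.sqrt (((r : ℝ) + 1) * τ) with hFdef
  set c₂ : ℝ → ℝ := fun μ => Real.sqrt (μ^2*b^2 + 4*π*(n:ℝ)^2) with hc2def
  have h4πn : (0:ℝ) < 4*π*(n:ℝ)^2 :=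
    mul_pos (mul_pos (by norm_num) hπ) (pow_pos hnR 2)
  have hc₂pos : ∀ μ : ℝ, 0 < c₂ μ := fun μ => Real.sqrt_pos.2 (by nlinarith [sq_nonneg (μ*b)])
  have ha₁pos : ∀ μ : ℝ, 0 < μ → 0 < π*μ^2*b^2*τ := fun μ hμ => by positivity
  have h4n2 : (0:ℝ) < 4*(n:ℝ)^2*π^2*τ :=
    mul_pos (mul_pos (mul_pos (by norm_num) (pow_pos hnR 2)) (pow_pos hπ 2)) hτ0
  have ha₂pos : ∀ μ : ℝ, 0 < π*μ^2*b^2*τ + 4*(n:ℝ)^2*π^2*τ := fun μ => by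
    have : (0:ℝ) ≤ π*μ^2*b^2*τ := by positivity
    linarith
  -- pointwise term identity
  have hterm : ∀ (μ : ℝ) (r : ℕ),
      b * Real.exp (-π * μ ^ 2 * b ^ 2 * ((r : ℝ) + 1) * τ) *
        (1 - Real.exp (-4 * (n : ℝ) ^ 2 * π ^ 2 * ((r : ℝ) + 1) * τ)) * τ /
        Real.sqrt (((r : ℝ) + 1) * τ)
      = b * Real.sqrt τ * (gg (π*μ^2*b^2*τ) ((r:ℝ)+1)
          - gg (π*μ^2*b^2*τ + 4*(n:ℝ)^2*π^2*τ) ((r:ℝ)+1)) := by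
    intro μ r
    have hx : (0:ℝ) < (r:ℝ)+1 := by positivity
    have h := term_eq (b:=b) hτ0 hx (-(π*μ^2*b^2*τ)) (-(4*(n:ℝ)^2*π^2*τ))
    rw [show -(π*μ^2*b^2*τ)*((r:ℝ)+1) = -π*μ^2*b^2*((r:ℝ)+1)*τ from by ring,
      show -(4*(n:ℝ)^2*π^2*τ)*((r:ℝ)+1) = -4*(n:ℝ)^2*π^2*((r:ℝ)+1)*τ from by ring,
      neg_neg,
      show -(-(π*μ^2*b^2*τ) + -(4*(n:ℝ)^2*π^2*τ)) = π*μ^2*b^2*τ + 4*(n:ℝ)^2*π^2*τ from by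
        ring] at h
    exact h
  -- representation of F
  have hFrep : ∀ μ : ℝ, 0 < μ → F μ = b*Real.sqrt τ *
      ((∑' r : ℕ, gg (π*μ^2*b^2*τ) ((r:ℝ)+1))
        - ∑' r : ℕ, gg (π*μ^2*b^2*τ + 4*(n:ℝ)^2*π^2*τ) ((r:ℝ)+1)) := by
    intro μ hμ
    rw [hFdef]
    dsimp only
    calc (∑' r : ℕ, b * Real.exp (-π * μ ^ 2 * b ^ 2 * ((r : ℝ) + 1) * τ) *
          (1 - Real.exp (-4 * (n : ℝ) ^ 2 * π ^ 2 * ((r : ℝ) + 1) * τ)) * τ /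
          Real.sqrt (((r : ℝ) + 1) * τ))
        = ∑' r : ℕ, b * Real.sqrt τ * (gg (π*μ^2*b^2*τ) ((r:ℝ)+1)
            - gg (π*μ^2*b^2*τ + 4*(n:ℝ)^2*π^2*τ) ((r:ℝ)+1)) := tsum_congr (fun r => hterm μ r)
      _ = b * Real.sqrt τ * ∑' r : ℕ, (gg (π*μ^2*b^2*τ) ((r:ℝ)+1)
            - gg (π*μ^2*b^2*τ + 4*(n:ℝ)^2*π^2*τ) ((r:ℝ)+1)) := tsum_mul_left
      _ = b * Real.sqrt τ * ((∑' r : ℕ, gg (π*μ^2*b^2*τ) ((r:ℝ)+1))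
            - ∑' r : ℕ, gg (π*μ^2*b^2*τ + 4*(n:ℝ)^2*π^2*τ) ((r:ℝ)+1)) := by
          rw [Summable.tsum_sub (gg_summable (ha₁pos μ hμ)) (gg_summable (ha₂pos μ))]
  -- sqrt computations
  have hsa₁ : ∀ μ : ℝ, 0 < μ → Real.sqrt (π*μ^2*b^2*τ) = Real.sqrt π*(μ*b)*Real.sqrt τ := by
    intro μ hμ
    have hsq : (Real.sqrt π*(μ*b)*Real.sqrt τ)^2 = π*μ^2*b^2*τ := by
      rw [mul_pow, mul_pow, Real.sq_sqrt hπ.le, Real.sq_sqrt hτ0.le]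
      ring
    rw [← hsq, Real.sqrt_sq (mul_nonneg (mul_nonneg hsπ.le (mul_nonneg hμ.le hb.le)) hsτ.le)]
  have hsa₂ : ∀ μ : ℝ, Real.sqrt (π*μ^2*b^2*τ + 4*(n:ℝ)^2*π^2*τ)
      = Real.sqrt π*Real.sqrt τ*(c₂ μ) := by
    intro μ
    have hcc : (c₂ μ)^2 = μ^2*b^2 + 4*π*(n:ℝ)^2 :=
      Real.sq_sqrt (by nlinarith [sq_nonneg (μ*b)])
    have hsq : (Real.sqrt π*Real.sqrt τ*(c₂ μ))^2 = π*μ^2*b^2*τ + 4*(n:ℝ)^2*π^2*τ := by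
      rw [mul_pow, mul_pow, Real.sq_sqrt hπ.le, Real.sq_sqrt hτ0.le, hcc]
      ring
    rw [← hsq, Real.sqrt_sq (mul_nonneg (mul_nonneg hsπ.le hsτ.le) (hc₂pos μ).le)]
  have hcsq : ∀ μ : ℝ, (c₂ μ)^2 = μ^2*b^2 + 4*π*(n:ℝ)^2 :=
    fun μ => Real.sq_sqrt (by nlinarith [sq_nonneg (μ*b)])
  clear_value b c₂ F
  -- upper and lower bounds for F
  have hub : ∀ μ : ℝ, 0 < μ → F μ ≤ 1/μ - b/(c₂ μ) + 2*(b*Real.sqrt τ) := by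
    intro μ hμ
    rw [hFrep μ hμ]
    have h1 := gg_tsum_le (ha₁pos μ hμ)
    have h2 := le_gg_tsum (ha₂pos μ)
    have key : b*Real.sqrt τ * ((∑' r : ℕ, gg (π*μ^2*b^2*τ) ((r:ℝ)+1))
          - ∑' r : ℕ, gg (π*μ^2*b^2*τ + 4*(n:ℝ)^2*π^2*τ) ((r:ℝ)+1))
        ≤ b*Real.sqrt τ * (Real.sqrt π/Real.sqrt (π*μ^2*b^2*τ)
          - (Real.sqrt π/Real.sqrt (π*μ^2*b^2*τ + 4*(n:ℝ)^2*π^2*τ) - 2)) :=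
      mul_le_mul_of_nonneg_left (by linarith) (by positivity)
    have halg : b*Real.sqrt τ * (Real.sqrt π/Real.sqrt (π*μ^2*b^2*τ)
          - (Real.sqrt π/Real.sqrt (π*μ^2*b^2*τ + 4*(n:ℝ)^2*π^2*τ) - 2))
        = 1/μ - b/(c₂ μ) + 2*(b*Real.sqrt τ) := by
      rw [hsa₁ μ hμ, hsa₂ μ]
      field_simp [hμ.ne', hb.ne', hsτ.ne', hsπ.ne', (hc₂pos μ).ne']
      ring
    linarith
  have hlb : ∀ μ : ℝ, 0 < μ → 1/μ - b/(c₂ μ) - 2*(b*Real.sqrt τ) ≤ F μ := by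
    intro μ hμ
    rw [hFrep μ hμ]
    have h1 := le_gg_tsum (ha₁pos μ hμ)
    have h2 := gg_tsum_le (ha₂pos μ)
    have key : b*Real.sqrt τ * ((Real.sqrt π/Real.sqrt (π*μ^2*b^2*τ) - 2)
          - Real.sqrt π/Real.sqrt (π*μ^2*b^2*τ + 4*(n:ℝ)^2*π^2*τ))
        ≤ b*Real.sqrt τ * ((∑' r : ℕ, gg (π*μ^2*b^2*τ) ((r:ℝ)+1))
          - ∑' r : ℕ, gg (π*μ^2*b^2*τ + 4*(n:ℝ)^2*π^2*τ) ((r:ℝ)+1)) :=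
      mul_le_mul_of_nonneg_left (by linarith) (by positivity)
    have halg : b*Real.sqrt τ * ((Real.sqrt π/Real.sqrt (π*μ^2*b^2*τ) - 2)
          - Real.sqrt π/Real.sqrt (π*μ^2*b^2*τ + 4*(n:ℝ)^2*π^2*τ))
        = 1/μ - b/(c₂ μ) - 2*(b*Real.sqrt τ) := by
      rw [hsa₁ μ hμ, hsa₂ μ]
      field_simp [hμ.ne', hb.ne', hsτ.ne', hsπ.ne', (hc₂pos μ).ne']
      ring
    linarith
  -- numeric facts
  have hbsq : b^2 = lam^4*J₀^4/(64*π) := by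
    rw [hbdef, div_pow, mul_pow, mul_pow, Real.sq_sqrt hπ.le]
    ring_nf
  have hsqs : (ζ*lam^2)*(ζ*lam^2) ≤ (n:ℝ)*(n:ℝ) :=
    mul_le_mul hn hn (by positivity) hnR.le
  have hb2 : 4*b^2*τ + 16*π*(n:ℝ)^2*τ < 1 := by
    have h1 : 4*b^2*τ ≤ J₀^4*(n:ℝ)^2*τ/(16*π*ζ^2) := by
      rw [hbsq]
      have expand : J₀^4*(n:ℝ)^2*τ/(16*π*ζ^2) - 4*(lam^4*J₀^4/(64*π))*τ
          = (J₀^4*τ/(16*π*ζ^2))*((n:ℝ)*(n:ℝ) - (ζ*lam^2)*(ζ*lam^2)) := by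
        field_simp
        ring
      have hfac : (0:ℝ) ≤ J₀^4*τ/(16*π*ζ^2) := by positivity
      have h0 : 0 ≤ J₀^4*(n:ℝ)^2*τ/(16*π*ζ^2) - 4*(lam^4*J₀^4/(64*π))*τ := by
        rw [expand]
        exact mul_nonneg hfac (by linarith)
      linarith
    linarith
  have h2bt : 2*(b*Real.sqrt τ) ≤ 1 := by
    nlinarith [hττ, hb2, mul_pos hb hsτ, sq_nonneg (2*(b*Real.sqrt τ) - 1),
      mul_pos (mul_pos (by norm_num : (0:ℝ) < 16) hπ) (mul_pos (pow_pos hnR 2) hτ0)]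
  have hc₂ge : ∀ μ : ℝ, 2*Real.sqrt π*(n:ℝ) ≤ c₂ μ := by
    intro μ
    have hsq : (2*Real.sqrt π*(n:ℝ))^2 = 4*π*(n:ℝ)^2 := by
      rw [mul_pow, mul_pow, Real.sq_sqrt hπ.le]
      ring
    simp only [hc2def]
    rw [show 2*Real.sqrt π*(n:ℝ) = Real.sqrt (4*π*(n:ℝ)^2) from by
      rw [← hsq, Real.sqrt_sq (by positivity)]]
    exact Real.sqrt_le_sqrt (by nlinarith [sq_nonneg (μ*b)])
  have h2πn : (0:ℝ) < 2*Real.sqrt π*(n:ℝ) := by positivity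
  have hbc₂ : ∀ μ : ℝ, b/(c₂ μ) ≤ J₀^2/(16*π*ζ) := by
    intro μ
    have h1 : b/(c₂ μ) ≤ b/(2*Real.sqrt π*(n:ℝ)) :=
      div_le_div_of_nonneg_left hb.le h2πn (hc₂ge μ)
    have h2 : b/(2*Real.sqrt π*(n:ℝ)) ≤ J₀^2/(16*π*ζ) := by
      rw [hbdef, div_div, div_le_div_iff₀ (by positivity) (by positivity)]
      have hkey : J₀^2*(8*Real.sqrt π*(2*Real.sqrt π*(n:ℝ))) = 16*π*J₀^2*(n:ℝ) := by
        linear_combination (16*J₀^2*(n:ℝ))*hππ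
      have hmul := mul_le_mul_of_nonneg_left hn (show (0:ℝ) ≤ 16*π*J₀^2 by positivity)
      nlinarith [hkey, hmul]
    linarith
  -- F 1 < 1
  have hF1 : F 1 < 1 := by
    have h1 := hub 1 one_pos
    have hcs : (c₂ 1)^2 = 1^2*b^2 + 4*π*(n:ℝ)^2 := hcsq 1
    have hgap : 2*(b*Real.sqrt τ) < b/(c₂ 1) := by
      rw [lt_div_iff₀ (hc₂pos 1)]
      have hs2 : (2*Real.sqrt τ*(c₂ 1))^2 = 4*b^2*τ + 16*π*(n:ℝ)^2*τ := by
        rw [mul_pow, mul_pow, Real.sq_sqrt hτ0.le, hcs]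
        ring
      nlinarith [hs2, hb2, hb, sq_nonneg (2*Real.sqrt τ*(c₂ 1) - 1),
        mul_pos hsτ (hc₂pos 1)]
    norm_num at h1
    linarith
  -- small μ₀ with F μ₀ > 1
  set D : ℝ := 2*(b*Real.sqrt τ) + b/(2*Real.sqrt π*(n:ℝ)) with hDdef
  have hD : 0 ≤ D := by
    rw [hDdef]
    have := div_nonneg hb.le h2πn.le
    have := mul_nonneg hb.le hsτ.le
    linarith
  set μ₀ : ℝ := min (1/2) (1/(2+D)) with hμ₀def
  have hμ₀pos : 0 < μ₀ := lt_min (by norm_num) (by positivity)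
  have hμ₀lt1 : μ₀ < 1 := lt_of_le_of_lt (min_le_left _ _) (by norm_num)
  have hFμ₀ : 1 < F μ₀ := by
    have h1 := hlb μ₀ hμ₀pos
    have hle : μ₀ ≤ 1/(2+D) := min_le_right _ _
    have hinv : 2 + D ≤ 1/μ₀ := by
      rw [le_div_iff₀ hμ₀pos]
      calc (2+D)*μ₀ ≤ (2+D)*(1/(2+D)) := mul_le_mul_of_nonneg_left hle (by linarith)
        _ = 1 := by field_simp
    have hb2' : b/(c₂ μ₀) ≤ b/(2*Real.sqrt π*(n:ℝ)) :=
      div_le_div_of_nonneg_left hb.le h2πn (hc₂ge μ₀)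
    rw [hDdef] at hinv
    linarith
  -- continuity of F on [μ₀, 1]
  have hcont : ContinuousOn F (Set.Icc μ₀ 1) := by
    rw [hFdef]
    have hsum : Summable (fun r : ℕ => b*Real.sqrt τ * gg (π*μ₀^2*b^2*τ) ((r:ℝ)+1)) :=
      (gg_summable (ha₁pos μ₀ hμ₀pos)).mul_left _
    refine (tendstoUniformlyOn_tsum hsum ?_).continuousOn ?_
    · intro r μ hμ
      obtain ⟨hμl, hμr⟩ := hμ
      have hμpos : 0 < μ := lt_of_lt_of_le hμ₀pos hμl
      have hexple : Real.exp (-4*(n:ℝ)^2*π^2*((r:ℝ)+1)*τ) ≤ 1 := by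
        rw [Real.exp_le_one_iff]
        have := mul_pos h4n2 (show (0:ℝ) < (r:ℝ)+1 by positivity)
        nlinarith
      have hpos : 0 ≤ b * Real.exp (-π * μ ^ 2 * b ^ 2 * ((r : ℝ) + 1) * τ) *
          (1 - Real.exp (-4 * (n : ℝ) ^ 2 * π ^ 2 * ((r : ℝ) + 1) * τ)) * τ /
          Real.sqrt (((r : ℝ) + 1) * τ) := by
        apply div_nonneg _ (Real.sqrt_nonneg _)
        apply mul_nonneg _ hτ0.le
        exact mul_nonneg (mul_nonneg hb.le (Real.exp_nonneg _)) (by linarith)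
      rw [Real.norm_eq_abs, abs_of_nonneg hpos, hterm μ r]
      have hgg2 : 0 ≤ gg (π*μ^2*b^2*τ + 4*(n:ℝ)^2*π^2*τ) ((r:ℝ)+1) := gg_nonneg _ _
      have hmono : gg (π*μ^2*b^2*τ) ((r:ℝ)+1) ≤ gg (π*μ₀^2*b^2*τ) ((r:ℝ)+1) := by
        apply gg_anti_a (by positivity)
        have hμ2 : μ₀*μ₀ ≤ μ*μ := mul_le_mul hμl hμl hμ₀pos.le hμpos.le
        nlinarith [mul_pos (mul_pos hπ (mul_pos hb hb)) hτ0]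
      have hbst : (0:ℝ) ≤ b*Real.sqrt τ := mul_nonneg hb.le hsτ.le
      calc b*Real.sqrt τ*(gg (π*μ^2*b^2*τ) ((r:ℝ)+1)
            - gg (π*μ^2*b^2*τ + 4*(n:ℝ)^2*π^2*τ) ((r:ℝ)+1))
          ≤ b*Real.sqrt τ*(gg (π*μ₀^2*b^2*τ) ((r:ℝ)+1)) :=
            mul_le_mul_of_nonneg_left (by linarith) hbst
        _ = b*Real.sqrt τ * gg (π*μ₀^2*b^2*τ) ((r:ℝ)+1) := by ring
    · refine Filter.Eventually.frequently (Filter.Eventually.of_forall ?_)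
      intro t
      apply Continuous.continuousOn
      apply continuous_finset_sum
      intro r _
      apply Continuous.div_const
      apply Continuous.mul
      apply Continuous.mul
      · exact continuous_const.mul (Real.continuous_exp.comp (by fun_prop))
      · exact continuous_const.sub continuous_const
      · exact continuous_const
  -- IVT
  obtain ⟨μ, hμmem, hμF⟩ : ∃ μ ∈ Set.Icc μ₀ 1, F μ = 1 := by
    have himage := intermediate_value_Icc' hμ₀lt1.le hcont
    obtain ⟨μ, hμ, hFμ⟩ := himage ⟨hF1.le, hFμ₀.le⟩
    exact ⟨μ, hμ, hFμ⟩
  have hμpos : 0 < μ := lt_of_lt_of_le hμ₀pos hμmem.1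
  have hμlt1 : μ < 1 :=
    lt_of_le_of_ne hμmem.2 (fun h => by rw [h] at hμF; exact absurd hμF (ne_of_lt hF1))
  refine ⟨μ, ⟨hμpos, hμlt1⟩, ?_, ?_⟩
  · have h1 := hlb μ hμpos
    have h2 := hbc₂ μ
    rw [hμF] at h1
    have h3 : 1/μ ≤ 2 + J₀^2/(16*π*ζ) := by linarith
    have h4 : 1 ≤ (2 + J₀^2/(16*π*ζ))*μ := by rwa [div_le_iff₀ hμpos] at h3
    have hden : (0:ℝ) < J₀^2 + 32*π*ζ := by positivity
    rw [div_le_iff₀ hden]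
    have hpζ : (0:ℝ) < 16*π*ζ := by positivity
    have hexp : (2 + J₀^2/(16*π*ζ)) * (16*π*ζ) = 32*π*ζ + J₀^2 := by
      field_simp
      ring
    calc 16*π*ζ = 1*(16*π*ζ) := (one_mul _).symm
      _ ≤ ((2 + J₀^2/(16*π*ζ))*μ)*(16*π*ζ) := mul_le_mul_of_nonneg_right h4 hpζ.le
      _ = μ*((2 + J₀^2/(16*π*ζ))*(16*π*ζ)) := by ring
      _ = μ*(J₀^2 + 32*π*ζ) := by rw [hexp]; ring
  · have hFval : F μ = ∑' r : ℕ,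
        b * Real.exp (-π * μ ^ 2 * b ^ 2 * ((r : ℝ) + 1) * τ) *
          (1 - Real.exp (-4 * (n : ℝ) ^ 2 * π ^ 2 * ((r : ℝ) + 1) * τ)) * τ /
          Real.sqrt (((r : ℝ) + 1) * τ) := by rw [hFdef]
    rw [← hFval]
    exact hμF
end

section
/- For any function u ∈ C¹([0,1]) and integer n ≥ 1, ∫₀¹ |u(y) - u(κₙ(y))|² dy ≤ (1/n²) ∫₀¹ |u'(t)|² dt, where κₙ(y) = ⌊ny⌋/n. -/
open Real MeasureTheory

/-- Left grid point `⌊ny⌋/n`. -/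
noncomputable def kappa (n : ℕ) (y : ℝ) : ℝ := (⌊(n : ℝ) * y⌋ : ℝ) / n

/-- Cauchy–Schwarz for interval integrals. -/
lemma cs_aux {f : ℝ → ℝ} {a b : ℝ} (hab : a ≤ b)
    (hf : IntervalIntegrable f volume a b)
    (hf2 : IntervalIntegrable (fun t => (f t) ^ 2) volume a b) :
    (∫ t in a..b, f t) ^ 2 ≤ (b - a) * ∫ t in a..b, (f t) ^ 2 := by
  rcases eq_or_lt_of_le hab with h | h
  · subst h; simp
  set I := ∫ t in a..b, f t with hI
  set J := ∫ t in a..b, (f t) ^ 2 with hJ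
  have h0 : 0 ≤ ∫ t in a..b, ((b - a) * f t - I) ^ 2 :=
    intervalIntegral.integral_nonneg hab fun t _ => sq_nonneg _
  have hexp : ∫ t in a..b, ((b - a) * f t - I) ^ 2
      = (b - a) ^ 2 * J - 2 * (b - a) * I * I + (b - a) * I ^ 2 := by
    have heq : (fun t => ((b - a) * f t - I) ^ 2)
        = fun t => ((b - a) ^ 2 * (f t) ^ 2 - (2 * (b - a) * I) * f t) + I ^ 2 := by
      funext t; ring
    rw [heq, intervalIntegral.integral_add
          ((hf2.const_mul _).sub (hf.const_mul _)) intervalIntegrable_const,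
        intervalIntegral.integral_sub (hf2.const_mul _) (hf.const_mul _),
        intervalIntegral.integral_const_mul, intervalIntegral.integral_const_mul,
        intervalIntegral.integral_const]
    simp only [smul_eq_mul, ← hI, ← hJ]
    try ring
  rw [hexp] at h0
  nlinarith [h0, h]

theorem stmt15 (u : ℝ → ℝ) (hu : ContDiffOn ℝ 1 u (Set.Icc (0 : ℝ) 1))
    (n : ℕ) (hn : 1 ≤ n) :
    ∫ y in (0 : ℝ)..1, |u y - u (kappa n y)| ^ 2 ≤
      (1 / (n : ℝ) ^ 2) * ∫ t in (0 : ℝ)..1, |derivWithin u (Set.Icc (0 : ℝ) 1) t| ^ 2 := by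
  have hn0 : (0 : ℝ) < n := by exact_mod_cast hn
  set f := derivWithin u (Set.Icc (0 : ℝ) 1) with hf_def
  have hfc : ContinuousOn f (Set.Icc 0 1) :=
    hu.continuousOn_derivWithin (uniqueDiffOn_Icc one_pos) le_rfl
  have huc : ContinuousOn u (Set.Icc 0 1) := hu.continuousOn
  -- FTC on subintervals
  have ftc : ∀ a b : ℝ, 0 ≤ a → a ≤ b → b ≤ 1 → u b - u a = ∫ t in a..b, f t := by
    intro a b h0a hab hb1
    have hsub : Set.Icc a b ⊆ Set.Icc (0 : ℝ) 1 := Set.Icc_subset_Icc h0a hb1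
    refine (intervalIntegral.integral_eq_sub_of_hasDeriv_right_of_le hab
      (huc.mono hsub) ?_ ?_).symm
    · intro x hx
      have hx' : x ∈ Set.Ioo (0 : ℝ) 1 := ⟨lt_of_le_of_lt h0a hx.1, lt_of_lt_of_le hx.2 hb1⟩
      have hd : HasDerivWithinAt u (f x) (Set.Icc (0 : ℝ) 1) x :=
        (hu.differentiableOn one_ne_zero x (Set.Ioo_subset_Icc_self hx')).hasDerivWithinAt
      exact (hd.hasDerivAt (Icc_mem_nhds hx'.1 hx'.2)).hasDerivWithinAt
    · exact (hfc.mono hsub).intervalIntegrable_of_Icc hab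
  -- grid points
  set a : ℕ → ℝ := fun k => (k : ℝ) / n with ha_def
  have ha_nonneg : ∀ k : ℕ, 0 ≤ a k := fun k => by positivity
  have ha_le1 : ∀ k : ℕ, k ≤ n → a k ≤ 1 := by
    intro k hk
    rw [ha_def, div_le_one hn0]
    exact_mod_cast hk
  have ha_mono : ∀ k : ℕ, a k ≤ a (k + 1) := by
    intro k
    simp only [ha_def]
    gcongr
    linarith
  have ha_diff : ∀ k : ℕ, a (k + 1) - a k = 1 / n := by
    intro k
    simp only [ha_def]
    push_cast
    ring
  -- value of kappa on each cell
  have hkappa : ∀ k : ℕ, ∀ y ∈ Set.Ico (a k) (a (k + 1)), kappa n y = a k := by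
    intro k y hy
    have h1 : ⌊(n : ℝ) * y⌋ = (k : ℤ) := by
      rw [Int.floor_eq_iff]
      constructor
      · push_cast
        rw [mul_comm]
        calc (k : ℝ) = (k / n) * n := by field_simp
        _ ≤ y * n := by
            have := hy.1
            simp only [ha_def] at this
            nlinarith
      · push_cast
        rw [mul_comm]
        have := hy.2
        simp only [ha_def] at this
        calc y * n < ((k + 1 : ℝ) / n) * n := by push_cast at this ⊢; nlinarith
        _ = (k : ℝ) + 1 := by field_simp
    rw [kappa, h1, ha_def]
    push_cast
    ring
  -- integrability on each cell
  have hcont1 : ∀ k : ℕ, k < n → ContinuousOn (fun y => |u y - u (a k)| ^ 2)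
      (Set.Icc (a k) (a (k + 1))) := by
    intro k hk
    have hsub : Set.Icc (a k) (a (k + 1)) ⊆ Set.Icc (0 : ℝ) 1 :=
      Set.Icc_subset_Icc (ha_nonneg k) (ha_le1 (k + 1) hk)
    exact (((huc.mono hsub).sub continuousOn_const).abs).pow 2
  have hint1 : ∀ k : ℕ, k < n → IntervalIntegrable (fun y => |u y - u (a k)| ^ 2)
      volume (a k) (a (k + 1)) :=
    fun k hk => (hcont1 k hk).intervalIntegrable_of_Icc (ha_mono k)
  -- ae equality on each cell
  have hae : ∀ k : ℕ, ∀ᵐ y ∂(volume : Measure ℝ), y ∈ Set.uIoc (a k) (a (k + 1)) →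
      |u y - u (kappa n y)| ^ 2 = |u y - u (a k)| ^ 2 := by
    intro k
    have hbnull : (volume : Measure ℝ) {a (k + 1)} = 0 := measure_singleton _
    filter_upwards [compl_mem_ae_iff.mpr hbnull] with y hy hy2
    rw [Set.uIoc_of_le (ha_mono k)] at hy2
    have hy3 : y ∈ Set.Ico (a k) (a (k + 1)) :=
      ⟨hy2.1.le, lt_of_le_of_ne hy2.2 (by simpa using hy)⟩
    rw [hkappa k y hy3]
  have hint0 : ∀ k : ℕ, k < n → IntervalIntegrable (fun y => |u y - u (kappa n y)| ^ 2)
      volume (a k) (a (k + 1)) := by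
    intro k hk
    refine (hint1 k hk).congr_ae ?_
    exact (ae_restrict_iff' measurableSet_uIoc).mpr
      ((hae k).mono fun y h hy => (h hy).symm)
  have hintf : ∀ k : ℕ, k < n → IntervalIntegrable (fun t => |f t| ^ 2)
      volume (a k) (a (k + 1)) := by
    intro k hk
    have hsub : Set.Icc (a k) (a (k + 1)) ⊆ Set.Icc (0 : ℝ) 1 :=
      Set.Icc_subset_Icc (ha_nonneg k) (ha_le1 (k + 1) hk)
    exact (((hfc.mono hsub).abs).pow 2).intervalIntegrable_of_Icc (ha_mono k)
  -- the key estimate on each cell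
  have key : ∀ k : ℕ, k < n →
      (∫ y in a k..a (k + 1), |u y - u (kappa n y)| ^ 2)
        ≤ (1 / (n : ℝ) ^ 2) * ∫ t in a k..a (k + 1), |f t| ^ 2 := by
    intro k hk
    set p := a k with hp
    set q := a (k + 1) with hq
    have hpq : p ≤ q := ha_mono k
    have h0p : 0 ≤ p := ha_nonneg k
    have hq1 : q ≤ 1 := ha_le1 (k + 1) hk
    have hdiff : q - p = 1 / n := ha_diff k
    set C := ∫ t in p..q, |f t| ^ 2 with hC
    have hC' : C = ∫ t in p..q, (f t) ^ 2 := by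
      simp only [hC, sq_abs]
    have hCnonneg : 0 ≤ C := by
      rw [hC']
      exact intervalIntegral.integral_nonneg hpq fun t _ => sq_nonneg _
    rw [intervalIntegral.integral_congr_ae (hae k)]
    -- pointwise bound
    have hpt : ∀ y ∈ Set.Icc p q, |u y - u p| ^ 2 ≤ (1 / n) * C := by
      intro y hy
      have hy1 : y ≤ 1 := le_trans hy.2 hq1
      have hsubpy : Set.Icc p y ⊆ Set.Icc (0 : ℝ) 1 := Set.Icc_subset_Icc h0p hy1
      have hfint : IntervalIntegrable f volume p y :=
        (hfc.mono hsubpy).intervalIntegrable_of_Icc hy.1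
      have hf2int : IntervalIntegrable (fun t => (f t) ^ 2) volume p y :=
        (((hfc.mono hsubpy)).pow 2).intervalIntegrable_of_Icc hy.1
      rw [sq_abs, ftc p y h0p hy.1 hy1]
      have h1 : (∫ t in p..y, f t) ^ 2 ≤ (y - p) * ∫ t in p..y, (f t) ^ 2 :=
        cs_aux hy.1 hfint hf2int
      have h2 : ∫ t in p..y, (f t) ^ 2 ≤ ∫ t in p..q, (f t) ^ 2 := by
        refine intervalIntegral.integral_mono_interval le_rfl hy.1 hy.2 ?_ ?_
        · filter_upwards with t using sq_nonneg _
        · have hsub : Set.Icc p q ⊆ Set.Icc (0 : ℝ) 1 := Set.Icc_subset_Icc h0p hq1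
          exact (((hfc.mono hsub)).pow 2).intervalIntegrable_of_Icc hpq
      have h3 : 0 ≤ ∫ t in p..y, (f t) ^ 2 :=
        intervalIntegral.integral_nonneg hy.1 fun t _ => sq_nonneg _
      have h4 : y - p ≤ 1 / n := by
        have := hy.2
        linarith [hdiff]
      calc (∫ t in p..y, f t) ^ 2 ≤ (y - p) * ∫ t in p..y, (f t) ^ 2 := h1
        _ ≤ (1 / n) * ∫ t in p..q, (f t) ^ 2 := by
            apply mul_le_mul h4 h2 h3 (by positivity)
        _ = (1 / n) * C := by rw [hC']
    have hmono := intervalIntegral.integral_mono_on hpq (hint1 k hk)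
      intervalIntegrable_const hpt
    calc (∫ y in p..q, |u y - u p| ^ 2) ≤ ∫ _ in p..q, (1 / (n : ℝ)) * C := hmono
      _ = (q - p) * ((1 / n) * C) := by
          rw [intervalIntegral.integral_const, smul_eq_mul]
      _ = (1 / (n : ℝ) ^ 2) * C := by rw [hdiff]; ring
  -- sum up
  have ha0 : a 0 = 0 := by simp [ha_def]
  have han : a n = 1 := by
    simp only [ha_def]
    field_simp
  have hsplit1 : ∑ k ∈ Finset.range n, ∫ y in a k..a (k + 1), |u y - u (kappa n y)| ^ 2
      = ∫ y in (0 : ℝ)..1, |u y - u (kappa n y)| ^ 2 := by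
    rw [intervalIntegral.sum_integral_adjacent_intervals hint0, ha0, han]
  have hsplit2 : ∑ k ∈ Finset.range n, ∫ t in a k..a (k + 1), |f t| ^ 2
      = ∫ t in (0 : ℝ)..1, |f t| ^ 2 := by
    rw [intervalIntegral.sum_integral_adjacent_intervals hintf, ha0, han]
  rw [← hsplit1, ← hsplit2, Finset.mul_sum]
  exact Finset.sum_le_sum fun k hk => key k (Finset.mem_range.mp hk)
end

section
/- Let cₙʳ = sin²(rπ/n)/((rπ/n)²) for 1 ≤ r ≤ ⌊n/2⌋, so cₙʳ ∈ [4/π², 1]. Then there is a constant C > 0 such that for all n ≥ 3, Σ_{r=1}^{⌊n/2⌋} ∫₀^∞ |e^{-4π²r²t} - e^{-4π²r²cₙʳ t}|² dt ≤ C/n. -/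
set_option maxHeartbeats 1000000


open Real MeasureTheory

/-- `cₙʳ = sin²(rπ/n)/((rπ/n)²)`. -/
noncomputable def cfac (n r : ℕ) : ℝ := Real.sin ((r : ℝ) * π / n) ^ 2 / ((r : ℝ) * π / n) ^ 2

lemma int_t2_exp {b : ℝ} (hb : 0 < b) :
    ∫ t in Set.Ioi (0:ℝ), t ^ 2 * Real.exp (-(b * t)) = 2 / b ^ 3 := by
  have h := Real.integral_rpow_mul_exp_neg_mul_Ioi (a := 3) (by norm_num) hb
  have e : ∫ t in Set.Ioi (0:ℝ), t ^ 2 * Real.exp (-(b * t))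
      = ∫ t in Set.Ioi (0:ℝ), t ^ ((3:ℝ)-1) * Real.exp (-(b * t)) := by
    refine setIntegral_congr_fun measurableSet_Ioi (fun t ht => ?_)
    rw [show (3:ℝ)-1 = ((2:ℕ):ℝ) by norm_num, Real.rpow_natCast]
  have hG : Real.Gamma 3 = 2 := by
    rw [show (3:ℝ) = 2 + 1 by norm_num, Real.Gamma_add_one (by norm_num), Real.Gamma_two]
    norm_num
  have hr3 : (1/b) ^ (3:ℝ) = (1/b) ^ (3:ℕ) := by
    rw [← Real.rpow_natCast]; norm_num
  rw [e, h, hr3, hG]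
  have hb' : b ≠ 0 := hb.ne'
  field_simp

lemma integrable_t2_exp {b : ℝ} (hb : 0 < b) :
    IntegrableOn (fun t : ℝ => t ^ 2 * Real.exp (-(b * t))) (Set.Ioi 0) := by
  have h := integrableOn_rpow_mul_exp_neg_mul_rpow (s := 2) (p := 1)
    (by norm_num) one_pos hb
  refine h.congr_fun (fun t ht => ?_) measurableSet_Ioi
  dsimp only
  rw [Real.rpow_one, show (2:ℝ) = ((2:ℕ):ℝ) by norm_num, Real.rpow_natCast, neg_mul]

lemma term_bound {a b : ℝ} (hb : 0 < b) (hba : b ≤ a) :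
    ∫ t in Set.Ioi (0:ℝ), (Real.exp (-(a * t)) - Real.exp (-(b * t))) ^ 2
      ≤ (a - b) ^ 2 / (4 * b ^ 3) := by
  have key : ∫ t in Set.Ioi (0:ℝ), (Real.exp (-(a * t)) - Real.exp (-(b * t))) ^ 2
      ≤ ∫ t in Set.Ioi (0:ℝ), (a - b) ^ 2 * (t ^ 2 * Real.exp (-(2 * b * t))) := by
    refine integral_mono_of_nonneg ?_ ((integrable_t2_exp (by linarith)).const_mul _) ?_
    · filter_upwards with t using by positivity
    · rw [Filter.EventuallyLE, ae_restrict_iff' measurableSet_Ioi]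
      filter_upwards with t ht
      have ht0 : 0 < t := ht
      have h1 : Real.exp (-(a*t)) ≤ Real.exp (-(b*t)) :=
        Real.exp_le_exp.2 (by nlinarith)
      have he : 0 < Real.exp (-(b*t)) := Real.exp_pos _
      have h2 : Real.exp (-(b*t)) - Real.exp (-(a*t)) ≤ (a - b) * t * Real.exp (-(b*t)) := by
        have heq : Real.exp (-(a*t)) = Real.exp (-(b*t)) * Real.exp (-((a-b)*t)) := by
          rw [← Real.exp_add]; ring_nf
        rw [heq]
        have h3 : 1 - ((a-b)*t) ≤ Real.exp (-((a-b)*t)) := by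
          have := Real.add_one_le_exp (-((a-b)*t)); linarith
        nlinarith
      have h4 : Real.exp (-(2*b*t)) = Real.exp (-(b*t)) ^ 2 := by
        rw [sq, ← Real.exp_add]; ring_nf
      rw [h4]
      have hX : 0 ≤ (a - b) * t * Real.exp (-(b*t)) := by
        have : 0 ≤ a - b := by linarith
        positivity
      nlinarith [h1, h2, hX]
  rw [integral_const_mul, int_t2_exp (by linarith : (0:ℝ) < 2*b)] at key
  calc _ ≤ (a-b)^2 * (2/(2*b)^3) := key
    _ = (a - b) ^ 2 / (4 * b ^ 3) := by ring

theorem stmt17 :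
    ∃ C : ℝ, 0 < C ∧ ∀ n : ℕ, 3 ≤ n →
      ∑ r ∈ Finset.Icc 1 (n / 2),
        (∫ t in Set.Ioi (0 : ℝ),
          (Real.exp (-4 * π ^ 2 * (r : ℝ) ^ 2 * t) -
            Real.exp (-4 * π ^ 2 * (r : ℝ) ^ 2 * cfac n r * t)) ^ 2) ≤ C / n := by
  refine ⟨π ^ 8 / 1024, by positivity, fun n hn => ?_⟩
  have hn0 : (0:ℝ) < n := by positivity
  have hterm : ∀ r ∈ Finset.Icc 1 (n / 2),
      (∫ t in Set.Ioi (0 : ℝ),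
          (Real.exp (-4 * π ^ 2 * (r : ℝ) ^ 2 * t) -
            Real.exp (-4 * π ^ 2 * (r : ℝ) ^ 2 * cfac n r * t)) ^ 2)
        ≤ π ^ 8 / 1024 / n ^ 2 := by
    intro r hr
    obtain ⟨hr1, hr2⟩ := Finset.mem_Icc.1 hr
    have hr0 : (0:ℝ) < r := by exact_mod_cast hr1
    have hrR : (r:ℝ) * 2 ≤ n := by exact_mod_cast (by omega : r * 2 ≤ n)
    have hrn' : (r:ℝ) ≤ n := by exact_mod_cast (by omega : r ≤ n)
    set z : ℝ := (r:ℝ) * π / n with hz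
    have hz0 : 0 < z := by positivity
    have hzle : z ≤ π / 2 := by
      rw [hz, div_le_div_iff₀ hn0 two_pos]
      nlinarith [pi_pos]
    have hzpi : z < π := lt_of_le_of_lt hzle (by linarith [pi_pos])
    have hsin0 : 0 < Real.sin z := Real.sin_pos_of_pos_of_lt_pi hz0 hzpi
    have hsinle : Real.sin z ≤ z := Real.sin_le hz0.le
    have hjordan : 2 / π * z ≤ Real.sin z := Real.mul_le_sin hz0.le hzle
    have hceq : cfac n r = Real.sin z ^ 2 / z ^ 2 := rfl
    have hc1 : cfac n r ≤ 1 := by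
      rw [hceq, div_le_one (by positivity)]
      nlinarith
    have hclb : 4 / π ^ 2 ≤ cfac n r := by
      rw [hceq, le_div_iff₀ (by positivity)]
      have hp := pi_pos
      have h2 : 0 ≤ 2 / π * z := by positivity
      calc 4 / π ^ 2 * z ^ 2 = (2 / π * z) ^ 2 := by field_simp; ring
        _ ≤ Real.sin z ^ 2 := by nlinarith
    have hc0 : 0 < cfac n r := lt_of_lt_of_le (by positivity) hclb
    have h1c : 1 - cfac n r ≤ z ^ 2 := by
      have key : z ^ 2 - Real.sin z ^ 2 ≤ z ^ 2 * z ^ 2 := by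
        rcases le_or_gt z 1 with hzz | hzz
        · nlinarith [Real.sin_gt_sub_cube hz0, hsin0, hz0]
        · have h5 : 0 ≤ z ^ 2 * (z ^ 2 - 1) := mul_nonneg (sq_nonneg z) (by nlinarith)
          nlinarith [sq_nonneg (Real.sin z), h5]
      have hrw : 1 - cfac n r = (z ^ 2 - Real.sin z ^ 2) / z ^ 2 := by
        rw [hceq]; field_simp
      rw [hrw, div_le_iff₀ (by positivity)]
      linarith
    set a : ℝ := 4 * π ^ 2 * (r:ℝ) ^ 2 with ha
    have ha0 : 0 < a := by positivity
    set b : ℝ := a * cfac n r with hb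
    have hb0 : 0 < b := mul_pos ha0 hc0
    have hba : b ≤ a := by nlinarith
    have hmain : (∫ t in Set.Ioi (0 : ℝ),
          (Real.exp (-4 * π ^ 2 * (r : ℝ) ^ 2 * t) -
            Real.exp (-4 * π ^ 2 * (r : ℝ) ^ 2 * cfac n r * t)) ^ 2)
        ≤ (a - b) ^ 2 / (4 * b ^ 3) := by
      have hpt : ∀ t : ℝ,
          (Real.exp (-4 * π ^ 2 * (r : ℝ) ^ 2 * t) -
            Real.exp (-4 * π ^ 2 * (r : ℝ) ^ 2 * cfac n r * t)) ^ 2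
          = (Real.exp (-(a * t)) - Real.exp (-(b * t))) ^ 2 := by
        intro t
        have e1 : -4 * π ^ 2 * (r:ℝ) ^ 2 * t = -(a * t) := by rw [ha]; ring
        have e2 : -4 * π ^ 2 * (r:ℝ) ^ 2 * cfac n r * t = -(b * t) := by
          rw [hb, ha]; ring
        rw [e1, e2]
      simp_rw [hpt]
      exact term_bound hb0 hba
    refine hmain.trans ?_
    have habd : a - b ≤ 4 * π ^ 4 * (r:ℝ) ^ 4 / n ^ 2 := by
      have : a - b = a * (1 - cfac n r) := by rw [hb]; ring
      rw [this, ha]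
      calc 4 * π ^ 2 * (r:ℝ)^2 * (1 - cfac n r) ≤ 4 * π ^ 2 * (r:ℝ)^2 * z^2 :=
            mul_le_mul_of_nonneg_left h1c (by positivity)
        _ = 4 * π ^ 4 * (r:ℝ) ^ 4 / n ^ 2 := by rw [hz]; field_simp
    have hblb : 16 * (r:ℝ) ^ 2 ≤ b := by
      have hp := pi_pos
      have h := mul_le_mul_of_nonneg_left hclb
        (by positivity : (0:ℝ) ≤ 4 * π ^ 2 * (r:ℝ)^2)
      rw [hb, ha]
      have heq : 4 * π ^ 2 * (r:ℝ)^2 * (4 / π ^ 2) = 16 * (r:ℝ)^2 := by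
        field_simp; ring
      linarith [heq ▸ h]
    have hab0 : 0 ≤ a - b := by linarith
    have step1 : (a - b) ^ 2 / (4 * b ^ 3)
        ≤ (4 * π ^ 4 * (r:ℝ) ^ 4 / n ^ 2) ^ 2 / (4 * (16 * (r:ℝ)^2) ^ 3) := by
      apply div_le_div₀ (by positivity) (pow_le_pow_left₀ hab0 habd 2) (by positivity)
      have : (16 * (r:ℝ)^2)^3 ≤ b ^ 3 := pow_le_pow_left₀ (by positivity) hblb 3
      linarith
    refine step1.trans ?_
    have heval : (4 * π ^ 4 * (r:ℝ) ^ 4 / n ^ 2) ^ 2 / (4 * (16 * (r:ℝ)^2) ^ 3)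
        = π ^ 8 * (r:ℝ) ^ 2 / (1024 * (n:ℝ) ^ 4) := by
      field_simp
      ring
    rw [heval]
    have hstep : π ^ 8 * (r:ℝ) ^ 2 / (1024 * (n:ℝ) ^ 4) ≤ π ^ 8 * (n:ℝ) ^ 2 / (1024 * (n:ℝ) ^ 4) := by
      gcongr
    refine hstep.trans (le_of_eq ?_)
    field_simp
  calc ∑ r ∈ Finset.Icc 1 (n / 2),
        (∫ t in Set.Ioi (0 : ℝ),
          (Real.exp (-4 * π ^ 2 * (r : ℝ) ^ 2 * t) -
            Real.exp (-4 * π ^ 2 * (r : ℝ) ^ 2 * cfac n r * t)) ^ 2)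
      ≤ ∑ _r ∈ Finset.Icc 1 (n / 2), π ^ 8 / 1024 / n ^ 2 :=
        Finset.sum_le_sum hterm
    _ = ((n / 2 : ℕ) : ℝ) * (π ^ 8 / 1024 / n ^ 2) := by
        rw [Finset.sum_const, Nat.card_Icc, nsmul_eq_mul]
        norm_num
    _ ≤ (n : ℝ) * (π ^ 8 / 1024 / n ^ 2) := by
        have : ((n / 2 : ℕ) : ℝ) ≤ (n : ℝ) := by
          exact_mod_cast Nat.div_le_self n 2
        have hpos : (0:ℝ) ≤ π ^ 8 / 1024 / n ^ 2 := by positivity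
        exact mul_le_mul_of_nonneg_right this hpos
    _ = π ^ 8 / 1024 / n := by
        field_simp
end
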